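/- Let n ≥ 1, L ≥ 1, and x, y ∈ (Z^d)^n. For x, let x^{(1)},…,x^{(K)} (K ≤ n^n) be all points whose coordinates are chosen among {x_1,…,x_n}. If y ∉ ⋃_j Λ_{2nL}(x^{(j)}) (sup-norm cubes of radius 2nL in R^{nd}), then the cubes Λ_L(y) and Λ_L(x) are pre-separable. -/
import Mathlib


/-- The projection `Π_J Λ_L(u) = ⋃_{j∈J} Λ_L(u_j) ⊂ ℝ^d`, where `Λ_L(v)` is the
open sup-norm cube of radius `L` around `v` (`Fin d → ℝ` carries the sup norm). -/
def piProj (d n : ℕ) (L : ℝ) (u : Fin n → Fin d → ℤ) (J : Finset (Fin n)) :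
    Set (Fin d → ℝ) :=
  ⋃ j ∈ J, Metric.ball (fun i => ((u j i : ℝ))) L

/-- Cubes `Λ_L(u)` and `Λ_L(v)` are pre-separable if for some nonempty
`J ⊆ {1,…,n}` and one of the two orderings,
`Π_J Λ_L(u) ∩ (Π_{J^c} Λ_L(u) ∪ Π Λ_L(v)) = ∅`. -/
def PreSeparable (d n : ℕ) (L : ℝ) (u v : Fin n → Fin d → ℤ) : Prop :=
  ∃ J : Finset (Fin n), J.Nonempty ∧
    (piProj d n L u J ∩ (piProj d n L u Jᶜ ∪ piProj d n L v Finset.univ) = ∅ ∨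
     piProj d n L v J ∩ (piProj d n L v Jᶜ ∪ piProj d n L u Finset.univ) = ∅)

noncomputable def rc (d : ℕ) (u : Fin d → ℤ) : Fin d → ℝ := fun i => (u i : ℝ)

open Classical in
noncomputable def FF (d n : ℕ) (L : ℝ) (x y : Fin n → Fin d → ℤ) : ℕ → Finset (Fin n)
  | 0 => Finset.univ.filter fun k => ∃ m, dist (rc d (y k)) (rc d (x m)) < 2 * L
  | (r+1) => FF d n L x y r ∪ (Finset.univ.filter fun k =>
      ∃ l ∈ FF d n L x y r, dist (rc d (y k)) (rc d (y l)) < 2 * L)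

lemma FF_mem_zero (d n : ℕ) (L : ℝ) (x y : Fin n → Fin d → ℤ) (k : Fin n) :
    k ∈ FF d n L x y 0 ↔ ∃ m, dist (rc d (y k)) (rc d (x m)) < 2 * L := by
  rw [FF]
  simp

lemma FF_mem_succ (d n : ℕ) (L : ℝ) (x y : Fin n → Fin d → ℤ) (r : ℕ) (k : Fin n) :
    k ∈ FF d n L x y (r+1) ↔ k ∈ FF d n L x y r ∨
      ∃ l ∈ FF d n L x y r, dist (rc d (y k)) (rc d (y l)) < 2 * L := by
  rw [FF]
  simp

lemma FF_mono (d n : ℕ) (L : ℝ) (x y : Fin n → Fin d → ℤ) (r : ℕ) :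
    FF d n L x y r ⊆ FF d n L x y (r+1) := fun k hk =>
  (FF_mem_succ d n L x y r k).mpr (Or.inl hk)

lemma FF_zero_subset (d n : ℕ) (L : ℝ) (x y : Fin n → Fin d → ℤ) (r : ℕ) :
    FF d n L x y 0 ⊆ FF d n L x y r := by
  induction r with
  | zero => exact subset_rfl
  | succ r ih => exact ih.trans (FF_mono d n L x y r)

lemma FF_bound (d n : ℕ) (L : ℝ) (hL0 : 0 ≤ L) (x y : Fin n → Fin d → ℤ) :
    ∀ r, ∀ k ∈ FF d n L x y r, ∃ m, dist (rc d (y k)) (rc d (x m)) < 2 * L * (r + 1) := by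
  intro r
  induction r with
  | zero =>
    intro k hk
    obtain ⟨m, hm⟩ := (FF_mem_zero d n L x y k).mp hk
    exact ⟨m, by push_cast; linarith⟩
  | succ r ih =>
    intro k hk
    rcases (FF_mem_succ d n L x y r k).mp hk with hk | ⟨l, hl, hdl⟩
    · obtain ⟨m, hm⟩ := ih k hk
      exact ⟨m, by push_cast; nlinarith⟩
    · obtain ⟨m, hm⟩ := ih l hl
      refine ⟨m, ?_⟩
      have := dist_triangle (rc d (y k)) (rc d (y l)) (rc d (x m))
      push_cast; nlinarith

lemma FF_perm (d n : ℕ) (L : ℝ) (x y : Fin n → Fin d → ℤ) (r : ℕ)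
    (hr : FF d n L x y r = FF d n L x y (r+1)) :
    ∀ s, r ≤ s → FF d n L x y s = FF d n L x y (s+1) := by
  intro s hs
  induction s, hs using Nat.le_induction with
  | base => exact hr
  | succ s hs ih =>
    refine Finset.Subset.antisymm (FF_mono d n L x y (s+1)) ?_
    intro k hk
    rcases (FF_mem_succ d n L x y (s+1) k).mp hk with hk | ⟨l, hl, hd⟩
    · exact hk
    · rw [← ih] at hl
      exact (FF_mem_succ d n L x y s k).mpr (Or.inr ⟨l, hl, hd⟩)

lemma FF_dich (d n : ℕ) (L : ℝ) (x y : Fin n → Fin d → ℤ) (N : ℕ) (hN : n = N + 1) :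
    FF d n L x y N = Finset.univ ∨ FF d n L x y (N+1) = FF d n L x y N := by
  by_cases hs : FF d n L x y (N+1) = FF d n L x y N
  · exact Or.inr hs
  left
  have hne : ∀ s ≤ N, FF d n L x y s ≠ FF d n L x y (s+1) := by
    intro s hsle he
    exact hs (FF_perm d n L x y s he N hsle).symm
  have hcard : ∀ s ≤ N, s + 1 ≤ (FF d n L x y s).card := by
    intro s
    induction s with
    | zero =>
      intro _
      rw [Nat.succ_le_iff, Finset.card_pos, Finset.nonempty_iff_ne_empty]
      intro h0
      apply hne 0 (Nat.zero_le N)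
      refine Finset.Subset.antisymm (FF_mono d n L x y 0) ?_
      intro k hk
      rcases (FF_mem_succ d n L x y 0 k).mp hk with hk | ⟨l, hl, _⟩
      · exact hk
      · rw [h0] at hl
        exact absurd hl (Finset.notMem_empty l)
    | succ s ih =>
      intro hsle
      have h1 := ih (le_trans (Nat.le_succ s) hsle)
      have hss : FF d n L x y s ⊂ FF d n L x y (s+1) :=
        (Finset.ssubset_iff_of_subset (FF_mono d n L x y s)).mpr <| by
          rcases Finset.exists_of_ssubset (lt_of_le_of_ne (FF_mono d n L x y s)
            (hne s (le_trans (Nat.le_succ s) hsle))) with ⟨a, ha, hna⟩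
          exact ⟨a, ha, hna⟩
      have := Finset.card_lt_card hss
      omega
  have h2 := hcard N le_rfl
  have h3 : (FF d n L x y N).card ≤ Fintype.card (Fin n) := Finset.card_le_univ _
  rw [Fintype.card_fin] at h3
  apply Finset.eq_univ_of_card
  rw [Fintype.card_fin]
  omega

/-- If `y` lies outside all the cubes `Λ_{2nL}(x^{(j)})` in `ℝ^{nd}`
(sup norm), where the `x^{(j)}` range over all points whose coordinates are chosen
among `{x_1,…,x_n}`, then `Λ_L(y)` and `Λ_L(x)` are pre-separable. -/
theorem stmt3 (d n : ℕ) (hn : 1 ≤ n) (L : ℕ) (hL : 1 ≤ L)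
    (x y : Fin n → Fin d → ℤ)
    (h : ∀ v : Fin n → Fin d → ℤ, (∀ k : Fin n, ∃ m : Fin n, v k = x m) →
      2 * (n : ℝ) * L ≤ ‖y - v‖) :
    PreSeparable d n L x y := by
  obtain ⟨N, hN⟩ : ∃ N, n = N + 1 := ⟨n - 1, (Nat.succ_pred_eq_of_pos hn).symm⟩
  have hL1 : (1:ℝ) ≤ (L:ℝ) := by exact_mod_cast hL
  have hn1 : (1:ℝ) ≤ (n:ℝ) := by exact_mod_cast hn
  have hpos : (0:ℝ) < 2 * (n:ℝ) * L := by nlinarith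
  have hNn : ((N:ℝ) + 1) = (n:ℝ) := by rw [hN]; push_cast; ring
  by_cases hu : FF d n (L:ℝ) x y N = Finset.univ
  · -- every index is reachable: build v and contradict h
    exfalso
    have hb : ∀ k, ∃ m, dist (rc d (y k)) (rc d (x m)) < 2 * (L:ℝ) * (N + 1) := by
      intro k
      exact FF_bound d n (L:ℝ) (by linarith) x y N k (hu ▸ Finset.mem_univ k)
    choose m hm using hb
    have hv := h (fun k => x (m k)) (fun k => ⟨m k, rfl⟩)
    have hlt : ‖y - (fun k => x (m k))‖ < 2 * (n:ℝ) * L := by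
      rw [pi_norm_lt_iff hpos]
      intro k
      rw [pi_norm_lt_iff hpos]
      intro i
      have h1 := dist_le_pi_dist (rc d (y k)) (rc d (x (m k))) i
      have h2 := hm k
      simp only [rc, Real.dist_eq] at h1
      simp only [Pi.sub_apply, Int.norm_eq_abs]
      push_cast
      rw [← hNn]
      linarith
    linarith
  · have hstab : FF d n (L:ℝ) x y (N+1) = FF d n (L:ℝ) x y N :=
      (FF_dich d n (L:ℝ) x y N hN).resolve_left hu
    refine ⟨(FF d n (L:ℝ) x y N)ᶜ, ?_, Or.inr ?_⟩
    · rw [Finset.nonempty_iff_ne_empty]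
      simpa [Finset.compl_eq_empty_iff] using hu
    · rw [Set.eq_empty_iff_forall_notMem]
      rintro t ⟨ht1, ht2⟩
      simp only [piProj, Set.mem_union, Set.mem_iUnion, Metric.mem_ball, Finset.mem_compl,
        compl_compl, exists_prop] at ht1 ht2
      obtain ⟨k, hk, hkt⟩ := ht1
      rcases ht2 with ⟨l, hl, hlt'⟩ | ⟨mm, _, hmt⟩
      · apply hk
        rw [← hstab]
        apply (FF_mem_succ d n (L:ℝ) x y N k).mpr
        refine Or.inr ⟨l, hl, ?_⟩
        show dist (fun i => ((y k i : ℝ))) (fun i => ((y l i : ℝ))) < 2 * (L:ℝ)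
        have h3 := dist_triangle (fun i => ((y k i : ℝ))) t (fun i => ((y l i : ℝ)))
        rw [dist_comm (fun i => ((y k i : ℝ))) t] at h3
        linarith
      · apply hk
        apply FF_zero_subset d n (L:ℝ) x y N
        apply (FF_mem_zero d n (L:ℝ) x y k).mpr
        refine ⟨mm, ?_⟩
        show dist (fun i => ((y k i : ℝ))) (fun i => ((x mm i : ℝ))) < 2 * (L:ℝ)
        have h3 := dist_triangle (fun i => ((y k i : ℝ))) t (fun i => ((x mm i : ℝ)))
        rw [dist_comm (fun i => ((y k i : ℝ))) t] at h3
        linarith
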